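/- Let N = l^n with l > 2 and n ≥ 3, let 1 ≤ m ≤ n-2 and let a be any integer. Then M_t(x_1,...,x_t) = ± Id over Z/NZ, where t = 2·l^(n-m) - 4·l^(n-m-1) + 2 and the tuple (x_1,...,x_t) has x_1 = x_t = 2a·l^(n-1) mod N and all other entries equal to a·l^m mod N. More precisely, this product equals (-1)^(1 + l^(n-m-1)(l+2)) times the identity. -/

import Mathlib

lemma binom_rem {M : Type*} [Ring M] (w : M) : ∀ L : ℕ, ∃ J : M,
    (1 + w) ^ L = 1 + L • w + (L.choose 2) • w ^ 2 + w ^ 3 * J ∧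
      ∀ x : M, Commute x w → Commute x J := by
  intro L
  induction L with
  | zero => exact ⟨0, by simp, fun x _ => Commute.zero_right x⟩
  | succ L ih =>
    obtain ⟨J, hJ, hc⟩ := ih
    have hwJ : Commute w J := hc w (Commute.refl w)
    refine ⟨(L.choose 2 : ℕ) • (1 : M) + J + w * J, ?_, ?_⟩
    · rw [pow_succ, hJ, Nat.choose_succ_succ, Nat.choose_one_right]
      have h5 : w ^ 3 * J * w = w ^ 3 * (w * J) := by rw [mul_assoc, ← hwJ.eq]
      simp only [mul_add, mul_one, add_mul, one_mul, smul_mul_assoc, mul_smul_comm,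
        ← pow_succ, ← pow_two, h5, succ_nsmul, add_smul]
      abel
    · intro x hx
      exact ((Commute.one_right x).smul_right _ |>.add_right (hc x hx)).add_right
        (hx.mul_right (hc x hx))

lemma key_pow {R M : Type*} [CommRing R] [Ring M] [Algebra R M]
    (l d m' : ℕ) (hdl : d ∣ l) (hdc2 : d ∣ l.choose 2)
    (a : R) (A : M) : ∀ j : ℕ, ∃ G : M, Commute A G ∧
      (1 - (a * (l : R) ^ (m' + 1)) • A) ^ (l ^ j) =
        1 - (a * (l : R) ^ (m' + 1 + j)) • A
          + ((l : R) ^ (2 * m' + j + 1) * (d : R)) • G := by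
  obtain ⟨q1, hq1⟩ := hdl
  obtain ⟨q2, hq2⟩ := hdc2
  set lam : R := (l : R) with hlam
  set del : R := (d : R) with hdel
  have hlR : lam = del * (q1 : R) := by rw [hlam, hdel, hq1]; push_cast; ring
  have hc2R : ((l.choose 2 : ℕ) : R) = del * (q2 : R) := by rw [hq2]; push_cast; ring
  intro j
  induction j with
  | zero => exact ⟨0, Commute.zero_right A, by simp⟩
  | succ j ih =>
    obtain ⟨G, hAG, hYj⟩ := ih
    set s : R := a * lam ^ (m' + 1 + j) with hs
    set t : R := lam ^ (2 * m' + j + 1) * del with ht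
    set w : M := -(s • A) + t • G with hw
    have hGA : G * A = A * G := hAG.symm.eq
    have hAw : Commute A w :=
      (((Commute.refl A).smul_right s).neg_right).add_right (hAG.smul_right t)
    obtain ⟨J, hJ, hJc⟩ := binom_rem w l
    have hAJ : Commute A J := hJc A hAw
    set W : M := -(a • A) + (lam ^ m' * del) • G with hW
    have hAW : Commute A W :=
      (((Commute.refl A).smul_right a).neg_right).add_right (hAG.smul_right _)
    have hwW : w = (lam ^ (m' + 1 + j)) • W := by
      rw [hw, hW]
      module
    have hw2 : w ^ 2 = (s * s) • (A * A) - (s * t + s * t) • (A * G)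
        + (t * t) • (G * G) := by
      rw [pow_two, hw]
      simp only [add_mul, mul_add, neg_mul, mul_neg, smul_mul_assoc, mul_smul_comm,
        smul_smul, hGA]
      module
    have hw3J : w ^ 3 * J = (lam ^ (m' + 1 + j) * (lam ^ (m' + 1 + j) * lam ^ (m' + 1 + j)))
        • (W ^ 3 * J) := by
      rw [hwW, smul_pow, smul_mul_assoc, pow_succ, pow_two, mul_assoc]
    refine ⟨G + ((q2 : R) * (a * a) * lam ^ j) • (A * A)
        - (((l.choose 2 : ℕ) : R) * (a + a) * lam ^ (m' + j)) • (A * G)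
        + (((l.choose 2 : ℕ) : R) * lam ^ (2 * m' + j) * del) • (G * G)
        + ((q1 : R) * lam ^ (m' + 2 * j)) • (W ^ 3 * J), ?_, ?_⟩
    · refine ((((hAG.add_right ?_).sub_right ?_).add_right ?_).add_right ?_)
      · exact ((Commute.refl A).mul_right (Commute.refl A)).smul_right _
      · exact ((Commute.refl A).mul_right hAG).smul_right _
      · exact (hAG.mul_right hAG).smul_right _
      · exact ((hAW.pow_right 3).mul_right hAJ).smul_right _
    · have he : l ^ (j + 1) = l ^ j * l := pow_succ l j
      have hstep : (1 - (a * lam ^ (m' + 1)) • A) ^ l ^ (j + 1) = (1 + w) ^ l := by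
        rw [he, pow_mul, hYj, hw]
        congr 1
        abel
      rw [hstep, hJ, ← Nat.cast_smul_eq_nsmul R l w, ← Nat.cast_smul_eq_nsmul R (l.choose 2) (w^2),
        hw2, hw3J, hw, hs, ht, hc2R]
      simp only [← hlam]
      match_scalars <;>
        first
          | ring1
          | linear_combination (lam ^ (3 * m' + 3 * j + 2)) * hlR

lemma exists_d (l : ℕ) : ∃ d : ℕ, d ∣ l ∧ l ∣ 2 * d ∧ d ∣ l.choose 2 := by
  rcases Nat.even_or_odd l with ⟨k, hk⟩ | ⟨k, hk⟩
  · refine ⟨k, ⟨2, by omega⟩, ⟨1, by omega⟩, ?_⟩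
    rw [Nat.choose_two_right]
    refine ⟨2 * k - 1, ?_⟩
    subst hk
    rcases Nat.eq_zero_or_pos k with rfl | hk0
    · simp
    · have h1 : k + k - 1 = 2 * k - 1 := by omega
      have h2 : (k + k) * (2 * k - 1) = 2 * (k * (2 * k - 1)) := by ring
      rw [h1, h2, Nat.mul_div_cancel_left _ two_pos]
  · refine ⟨l, dvd_rfl, ⟨2, by ring⟩, ?_⟩
    rw [Nat.choose_two_right]
    refine ⟨k, ?_⟩
    subst hk
    have h : 2 * k + 1 - 1 = 2 * k := by omega
    rw [h]
    have h2 : (2 * k + 1) * (2 * k) = 2 * ((2 * k + 1) * k) := by ring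
    rw [h2, Nat.mul_div_cancel_left _ two_pos]

/-- with N = l^n, l > 2, n ≥ 3, 1 ≤ m ≤ n-2, the product
M_t(x_1,…,x_t) with t = 2l^(n-m) - 4l^(n-m-1) + 2, x_1 = x_t = 2a·l^(n-1) and
middle entries a·l^m, equals (-1)^(1 + l^(n-m-1)(l+2)) · Id over Z/NZ. -/
theorem stmt_12 (l n : ℕ) (hl : 2 < l) (hn : 3 ≤ n) (N : ℕ) (hN : N = l ^ n)
    (m : ℕ) (hm1 : 1 ≤ m) (hm2 : m ≤ n - 2) (a : ℤ) :
    (!![((2 * a * l ^ (n - 1) : ℤ) : ZMod N), -1; 1, 0]) *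
      (!![((a * l ^ m : ℤ) : ZMod N), -1; 1, 0]) ^ (2 * l ^ (n - m) - 4 * l ^ (n - m - 1)) *
      (!![((2 * a * l ^ (n - 1) : ℤ) : ZMod N), -1; 1, 0]) =
    (-1 : ZMod N) ^ (1 + l ^ (n - m - 1) * (l + 2)) • (1 : Matrix (Fin 2) (Fin 2) (ZMod N))
    := by
  subst hN
  obtain ⟨m', rfl⟩ : ∃ m', m = m' + 1 := ⟨m - 1, by omega⟩
  obtain ⟨j, hnj, hj1⟩ : ∃ j, n = m' + 1 + j + 1 ∧ 1 ≤ j := ⟨n - m' - 2, by omega, by omega⟩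
  set R : Type := ZMod (l ^ n) with hR
  set lam : R := (l : R) with hlam
  set a' : R := ((a : ℤ) : R) with ha'
  set b : R := ((a * (l : ℤ) ^ (m' + 1) : ℤ) : R) with hbdef
  set c : R := ((2 * a * (l : ℤ) ^ (n - 1) : ℤ) : R) with hcdef
  set A : Matrix (Fin 2) (Fin 2) R := !![b, -1; 1, 0] with hA
  set B : Matrix (Fin 2) (Fin 2) R := !![c, -1; 1, 0] with hB
  -- cast facts
  have hln : lam ^ n = 0 := by
    rw [hlam, ← Nat.cast_pow, ZMod.natCast_self]
  have hln1 : lam ^ (n - 1) * lam = 0 := by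
    rw [← pow_succ, show n - 1 + 1 = n from by omega, hln]
  have hb : b = a' * lam ^ (m' + 1) := by
    rw [hbdef, ha', hlam, Int.cast_mul, Int.cast_pow, Int.cast_natCast]
  have hc : c = 2 * a' * lam ^ (n - 1) := by
    rw [hcdef, ha', hlam, Int.cast_mul, Int.cast_mul, Int.cast_pow, Int.cast_natCast, Int.cast_ofNat]
  -- A^2 relation
  have hA2 : A * A = -(1 - b • A) := by
    rw [hA]
    ext i k
    fin_cases i <;> fin_cases k <;>
      simp [Matrix.mul_apply, Fin.sum_univ_two, Matrix.one_apply] <;> ring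
  -- the core power computation
  obtain ⟨d, hdl, h2d, hdc2⟩ := exists_d l
  obtain ⟨q3, hq3⟩ := h2d
  set del : R := (d : R) with hdel
  have h2dR : (2 : R) * del = lam * (q3 : R) := by
    rw [hdel, hlam, ← Nat.cast_ofNat, ← Nat.cast_mul, hq3]; push_cast; ring
  obtain ⟨G, hAG, hKey⟩ := key_pow l d m' hdl hdc2 a' A j
  set V : Matrix (Fin 2) (Fin 2) R := -(a' • A) + (lam ^ m' * del) • G with hV
  have hZ : (1 - (a' * lam ^ (m' + 1)) • A) ^ (l ^ j) = 1 + lam ^ (n - 1) • V := by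
    rw [hKey, hV]
    have e1 : m' + 1 + j = n - 1 := by omega
    have e2 : 2 * m' + j + 1 = (n - 1) + m' := by omega
    rw [e1, e2]
    simp only [← hlam]
    module
  have hv2 : (lam ^ (n - 1) • V) ^ 2 = 0 := by
    rw [smul_pow]
    have : (lam ^ (n - 1)) ^ 2 = 0 := by
      rw [← pow_mul, show (n - 1) * 2 = n + (n - 2) from by omega, pow_add, hln, zero_mul]
    rw [this, zero_smul]
  have hv3 : (lam ^ (n - 1) • V) ^ 3 = 0 := by
    rw [pow_succ, hv2, zero_mul]
  obtain ⟨J, hJ, _⟩ := binom_rem (lam ^ (n - 1) • V) (l - 2)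
  have hcast : (((l - 2 : ℕ) : R)) = lam - 2 := by
    rw [Nat.cast_sub (by omega : 2 ≤ l), hlam]; norm_num
  have key2 : (1 + lam ^ (n - 1) • V) ^ (l - 2) = 1 + c • A := by
    rw [hJ, hv2, hv3, smul_zero, zero_mul, add_zero, add_zero,
      ← Nat.cast_smul_eq_nsmul R (l - 2), hcast, hc, hV]
    match_scalars <;>
      first
        | ring1
        | linear_combination (-a' : R) * hln1
        | linear_combination (lam ^ m' * del - lam ^ m' * (q3 : R)) * hln1
            - lam ^ (n - 1) * lam ^ m' * h2dR
  have hYfinal : (1 - (a' * lam ^ (m' + 1)) • A) ^ (l ^ j * (l - 2)) = 1 + c • A := by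
    rw [pow_mul, hZ, key2]
  -- exponent arithmetic
  have hKexp : 2 * l ^ (n - (m' + 1)) - 4 * l ^ (n - (m' + 1) - 1) = 2 * (l ^ j * (l - 2)) := by
    have h1 : n - (m' + 1) = j + 1 := by omega
    have h2 : n - (m' + 1) - 1 = j := by omega
    rw [h2, h1, pow_succ]
    have hle : 4 * l ^ j ≤ 2 * (l ^ j * l) := by nlinarith [pow_pos (show 0 < l by omega) j]
    zify [show 2 ≤ l from by omega, hle]
    ring
  have hApow : A ^ (2 * (l ^ j * (l - 2))) =
      ((-1 : R) ^ (l ^ j * (l - 2))) • (1 + c • A) := by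
    rw [pow_mul, sq, hA2, neg_pow, hb, hYfinal]
    have h1 : (-1 : Matrix (Fin 2) (Fin 2) R) ^ (l ^ j * (l - 2)) =
        ((-1 : R) ^ (l ^ j * (l - 2))) • 1 := by
      rw [show (-1 : Matrix (Fin 2) (Fin 2) R) = (-1 : R) • 1 from by simp, smul_pow, one_pow]
    rw [h1, smul_mul_assoc, one_mul]
  -- final matrix computation
  have hln1' : lam ^ (n - 1) * lam ^ (n - 1) = 0 := by
    rw [← pow_add, show n - 1 + (n - 1) = n + (n - 2) from by omega, pow_add, hln, zero_mul]
  have hcc : c * c = 0 := by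
    rw [hc]
    linear_combination (4 * a' * a') * hln1' 
  have hcb : c * b = 0 := by
    rw [hc, hb]
    have : lam ^ (n - 1) * lam ^ (m' + 1) = 0 := by
      rw [show m' + 1 = 1 + m' from by omega, pow_add, pow_one, ← mul_assoc, hln1, zero_mul]
    linear_combination (2 * a' * a') * this
  have hBCB : B * (1 + c • A) * B = -1 := by
    rw [hA, hB, Matrix.one_fin_two]
    ext i k
    fin_cases i <;> fin_cases k <;>
      simp [Matrix.mul_apply, Fin.sum_univ_two]
    all_goals
      first
        | ring1
        | linear_combination (c * b - 1) * hcc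
        | linear_combination (-b) * hcc
        | linear_combination b * hcc
        | linear_combination (-1 : R) * hcb
        | linear_combination hcb
        | linear_combination hcc
  rw [hKexp, hApow, mul_smul_comm, smul_mul_assoc, hBCB,
    show n - (m' + 1) - 1 = j from by omega]
  have hexp : 1 + l ^ j * (l + 2) = l ^ j * (l - 2) + (1 + 4 * l ^ j) := by
    zify [show 2 ≤ l from by omega]
    ring
  have hodd : Odd (1 + 4 * l ^ j) := ⟨2 * l ^ j, by ring⟩
  have hsgn : ((-1 : R)) ^ (1 + l ^ j * (l + 2)) = -((-1 : R) ^ (l ^ j * (l - 2))) := by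
    rw [hexp, pow_add, hodd.neg_one_pow, mul_neg_one]
  rw [hsgn, smul_neg, neg_smul]
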